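/- For any perfect matching M of a graph G, the anti-forcing number af(G,M) is at least c'(M), the maximum size of a compatible M-alternating set of G. -/

import Mathlib

open SimpleGraph

variable {V : Type*}

/-- A closed walk is an `M`-alternating cycle: it is a cycle and its edges alternate
(cyclically) between `M` and the complement of `M`. -/
def SimpleGraph.IsAltCycle (G : SimpleGraph V) (M : Set (Sym2 V)) {v : V} (c : G.Walk v v) :
    Prop :=
  c.IsCycle ∧ List.Chain' (fun e f => (e ∈ M ↔ f ∉ M)) c.edges ∧
    ∀ e f, c.edges.head? = some e → c.edges.getLast? = some f → (f ∈ M ↔ e ∉ M)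

/-- `S` is a forcing set of the perfect matching `M`: `S ⊆ M` and `M` is the unique
perfect matching of `G` containing `S`. -/
def SimpleGraph.IsForcingSet (G : SimpleGraph V) (M : G.Subgraph) (S : Set (Sym2 V)) : Prop :=
  S ⊆ M.edgeSet ∧ ∀ N : G.Subgraph, N.IsPerfectMatching → S ⊆ N.edgeSet → N = M

/-- `S` is an anti-forcing set of the perfect matching `M`: `S` consists of edges of `G`
not in `M`, and `M` is the unique perfect matching of `G - S` (equivalently, the unique
perfect matching of `G` whose edge set avoids `S`). -/
def SimpleGraph.IsAntiForcingSet (G : SimpleGraph V) (M : G.Subgraph) (S : Set (Sym2 V)) :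
    Prop :=
  S ⊆ G.edgeSet \ M.edgeSet ∧
    ∀ N : G.Subgraph, N.IsPerfectMatching → Disjoint N.edgeSet S → N = M

/-- The forcing number `f(G,M)`. -/
noncomputable def SimpleGraph.forcingNum (G : SimpleGraph V) (M : G.Subgraph) : ℕ :=
  sInf {n | ∃ S : Set (Sym2 V), G.IsForcingSet M S ∧ S.ncard = n}

/-- The anti-forcing number `af(G,M)`. -/
noncomputable def SimpleGraph.antiForcingNum (G : SimpleGraph V) (M : G.Subgraph) : ℕ :=
  sInf {n | ∃ S : Set (Sym2 V), G.IsAntiForcingSet M S ∧ S.ncard = n}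
/-- Two cycles are compatible w.r.t. `M`: every common edge lies in `M` and every common
vertex lies on a common edge belonging to `M` (so the cycles are disjoint or intersect
only at edges in `M`). -/
def SimpleGraph.CompatCycles (G : SimpleGraph V) (M : Set (Sym2 V)) {v w : V}
    (c : G.Walk v v) (d : G.Walk w w) : Prop :=
  (∀ e, e ∈ c.edges → e ∈ d.edges → e ∈ M) ∧
  (∀ x, x ∈ c.support → x ∈ d.support → ∃ e ∈ M, e ∈ c.edges ∧ e ∈ d.edges ∧ x ∈ e)

/-- `c'(M)`: the maximum cardinality of a compatible `M`-alternating set of cycles. -/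
noncomputable def SimpleGraph.compatNum (G : SimpleGraph V) (M : G.Subgraph) : ℕ :=
  sSup {n | ∃ f : Fin n → Σ v : V, G.Walk v v,
    (∀ i, G.IsAltCycle M.edgeSet (f i).2) ∧
    ∀ i j, i ≠ j → G.CompatCycles M.edgeSet (f i).2 (f j).2}


section Aux

variable {G : SimpleGraph V}

namespace SimpleGraph

lemma Walk.edges_getElem_eq_getVert {u v : V} (p : G.Walk u v) {i : ℕ}
    (h : i < p.edges.length) : p.edges[i] = s(p.getVert i, p.getVert (i+1)) := by
  induction p generalizing i with
  | nil => simp at h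
  | cons ha q ih =>
    cases i with
    | zero => simp
    | succ n =>
      simp only [edges_cons, List.getElem_cons_succ, getVert_cons_succ]
      exact ih (by simpa [edges_cons] using h)

/-- Injectivity of `getVert` on a cycle. -/
lemma Walk.IsCycle.getVert_eq_cases {v : V} {c : G.Walk v v} (hc : c.IsCycle)
    {i j : ℕ} (hi : i ≤ c.length) (hj : j ≤ c.length) (h : c.getVert i = c.getVert j) :
    i = j ∨ (i = 0 ∧ j = c.length) ∨ (i = c.length ∧ j = 0) := by
  have hnodup := hc.support_nodup
  have hlen : c.support.tail.length = c.length := by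
    simp [List.length_tail, c.length_support]
  have htail : ∀ k : ℕ, (hk : k < c.support.tail.length) →
      c.support.tail[k] = c.getVert (k + 1) := by
    intro k hk
    rw [List.getElem_tail]
    exact c.support_getElem_eq_getVert (by simpa [c.length_support] using by omega)
  have key : ∀ a b : ℕ, 1 ≤ a → a < b → b ≤ c.length → c.getVert a ≠ c.getVert b := by
    intro a b ha hab hb heq
    have h1 : a - 1 < c.support.tail.length := by omega
    have h2 : b - 1 < c.support.tail.length := by omega
    have := List.Nodup.getElem_inj_iff hnodup (i := a-1) (j := b-1) (hi := h1) (hj := h2)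
    rw [htail _ h1, htail _ h2] at this
    have ha' : a - 1 + 1 = a := by omega
    have hb' : b - 1 + 1 = b := by omega
    rw [ha', hb'] at this
    have := this.mp heq
    omega
  rcases Nat.lt_trichotomy i j with hij | rfl | hij
  · rcases Nat.eq_zero_or_pos i with rfl | hi1
    · rcases Nat.lt_or_ge j c.length with hjl | hjl
      · exfalso
        refine key j c.length (by omega) hjl le_rfl ?_
        rw [← h, c.getVert_zero, c.getVert_length]
      · right; left; exact ⟨rfl, by omega⟩
    · exact absurd h (key i j hi1 hij hj)
  · left; rfl
  · rcases Nat.eq_zero_or_pos j with rfl | hj1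
    · rcases Nat.lt_or_ge i c.length with hil | hil
      · exfalso
        refine key i c.length (by omega) hil le_rfl ?_
        rw [h, c.getVert_zero, c.getVert_length]
      · right; right; exact ⟨by omega, rfl⟩
    · exact absurd h.symm (key j i hj1 hij hi)

lemma Walk.IsCycle.neighborSet_base {v : V} {c : G.Walk v v} (hc : c.IsCycle) :
    c.toSubgraph.neighborSet v = {c.getVert 1, c.getVert (c.length - 1)} := by
  have h3 := hc.three_le_length
  ext y
  simp only [Subgraph.mem_neighborSet, Set.mem_insert_iff, Set.mem_singleton_iff]
  constructor
  · intro hadj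
    obtain ⟨i, hi, hilen⟩ := (c.toSubgraph_adj_iff).mp hadj
    rw [Sym2.eq_iff] at hi
    rcases hi with ⟨hx, hy⟩ | ⟨hy, hx⟩
    · rcases hc.getVert_eq_cases (by omega) (by omega) (hx.trans c.getVert_zero.symm)
        with rfl | ⟨_, h0⟩ | ⟨h, _⟩
      · left; rw [← hy]
      · omega
      · omega
    · rcases hc.getVert_eq_cases (i := i+1) (j := 0) (by omega) (by omega)
        (hx.trans c.getVert_zero.symm) with h | ⟨h, _⟩ | ⟨h, _⟩
      · omega
      · omega
      · right; rw [← hy]; congr 1; omega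
  · intro hy
    rcases hy with rfl | rfl
    · have := c.toSubgraph_adj_getVert (i := 0) (by omega)
      simpa using this
    · have := c.toSubgraph_adj_getVert (i := c.length - 1) (by omega)
      have h1 : c.length - 1 + 1 = c.length := by omega
      rw [h1, c.getVert_length] at this
      exact this.symm

lemma Walk.IsCycle.getVert_one_ne {v : V} {c : G.Walk v v} (hc : c.IsCycle) :
    c.getVert 1 ≠ c.getVert (c.length - 1) := by
  have h3 := hc.three_le_length
  intro h
  rcases hc.getVert_eq_cases (by omega) (by omega) h with h | ⟨h, _⟩ | ⟨h, h0⟩ <;> omega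

/-- The spanning coercion of a cycle's subgraph consists of cycles. -/
lemma Walk.IsCycle.isCycles_toSubgraph_spanningCoe {v : V} {c : G.Walk v v}
    (hc : c.IsCycle) : c.toSubgraph.spanningCoe.IsCycles := by
  classical
  intro x ⟨w, hw⟩
  simp only [mem_neighborSet, Subgraph.spanningCoe_adj] at hw
  have hx : x ∈ c.support := by
    have := c.toSubgraph.edge_vert hw
    rwa [c.verts_toSubgraph] at this
  have hrot := hc.rotate hx
  have hts : (c.rotate x hx).toSubgraph = c.toSubgraph := c.toSubgraph_rotate hx
  have hns : c.toSubgraph.spanningCoe.neighborSet x = c.toSubgraph.neighborSet x := by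
    ext y; simp
  rw [hns, ← hts, hrot.neighborSet_base]
  rw [Set.ncard_pair hrot.getVert_one_ne]

lemma Walk.IsAltCycle.aux {M : Set (Sym2 V)} {v : V} {c : G.Walk v v}
    (hcyc : c.IsCycle)
    (hch : List.Chain' (fun e f => (e ∈ M ↔ f ∉ M)) c.edges)
    (hwrap : ∀ e f, c.edges.head? = some e → c.edges.getLast? = some f → (f ∈ M ↔ e ∉ M))
    {x : V} {i j : ℕ} (hij : i < j) (hj : j < c.length)
    (hxi : x = c.getVert i ∨ x = c.getVert (i+1))
    (hxj : x = c.getVert j ∨ x = c.getVert (j+1)) :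
    (c.edges[i]'(by rw [c.length_edges]; omega) ∈ M ↔
      c.edges[j]'(by rw [c.length_edges]; omega) ∉ M) := by
  have h3 := hcyc.three_le_length
  have hel : c.edges.length = c.length := c.length_edges
  have hne : c.edges ≠ [] := by
    intro h; rw [h] at hel; simp at hel; omega
  rcases hxi with hxi | hxi <;> rcases hxj with hxj | hxj
  · exfalso
    rcases hcyc.getVert_eq_cases (i := i) (j := j) (by omega) (by omega)
      (hxi.symm.trans hxj) with h | ⟨_, h⟩ | ⟨h, _⟩ <;> omega
  · rcases hcyc.getVert_eq_cases (i := i) (j := j+1) (by omega) (by omega)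
      (hxi.symm.trans hxj) with h | ⟨h0, hn⟩ | ⟨h, h'⟩
    · omega
    · subst h0
      have hj' : j = c.edges.length - 1 := by omega
      have hhead : c.edges.head? = some (c.edges[0]'(by rw [hel]; omega)) := by
        rw [List.head?_eq_head hne, List.head_eq_getElem]
      have getElem_eq : ∀ (a b : ℕ) (ha : a < c.edges.length) (hb : b < c.edges.length),
          a = b → c.edges[a] = c.edges[b] := by
        intro a b ha hb h; subst h; rfl
      have hlast : c.edges.getLast? = some (c.edges[j]'(by omega)) := by
        rw [List.getLast?_eq_getLast hne, List.getLast_eq_getElem]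
        exact congrArg some (getElem_eq _ _ _ _ (by omega))
      have := hwrap _ _ hhead hlast
      tauto
    · omega
  · rcases hcyc.getVert_eq_cases (i := i+1) (j := j) (by omega) (by omega)
      (hxi.symm.trans hxj) with h | ⟨h, _⟩ | ⟨_, h⟩
    · subst h
      exact List.isChain_iff_getElem.mp hch i (by omega)
    · omega
    · omega
  · exfalso
    rcases hcyc.getVert_eq_cases (i := i+1) (j := j+1) (by omega) (by omega)
      (hxi.symm.trans hxj) with h | ⟨h, _⟩ | ⟨h, h'⟩ <;> omega

lemma Walk.IsAltCycle.isAlternating {M : Set (Sym2 V)} {v : V} {c : G.Walk v v}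
    (h : G.IsAltCycle M c) {x w w' : V} (hne : w ≠ w')
    (h1 : c.toSubgraph.Adj x w) (h2 : c.toSubgraph.Adj x w') :
    (s(x, w) ∈ M ↔ s(x, w') ∉ M) := by
  obtain ⟨hcyc, hch, hwrap⟩ := h
  have hel : c.edges.length = c.length := c.length_edges
  obtain ⟨i, hi, hilen⟩ := (c.toSubgraph_adj_iff).mp h1
  obtain ⟨j, hj, hjlen⟩ := (c.toSubgraph_adj_iff).mp h2
  have hEi : c.edges[i]'(by omega) = s(x, w) := by
    rw [c.edges_getElem_eq_getVert (by omega)]; exact hi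
  have hEj : c.edges[j]'(by omega) = s(x, w') := by
    rw [c.edges_getElem_eq_getVert (by omega)]; exact hj
  have hxi : x = c.getVert i ∨ x = c.getVert (i+1) := by
    rw [Sym2.eq_iff] at hi
    rcases hi with ⟨h', _⟩ | ⟨_, h'⟩
    · exact Or.inl h'.symm
    · exact Or.inr h'.symm
  have hxj : x = c.getVert j ∨ x = c.getVert (j+1) := by
    rw [Sym2.eq_iff] at hj
    rcases hj with ⟨h', _⟩ | ⟨_, h'⟩
    · exact Or.inl h'.symm
    · exact Or.inr h'.symm
  have hij : i ≠ j := by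
    rintro rfl
    apply hne
    rw [hEi] at hEj
    exact Sym2.congr_right.mp hEj
  rcases Nat.lt_or_ge i j with hlt | hge
  · have := Walk.IsAltCycle.aux hcyc hch hwrap hlt hjlen hxi hxj
    rw [hEi, hEj] at this
    exact this
  · have hlt : j < i := by omega
    have := Walk.IsAltCycle.aux hcyc hch hwrap hlt hilen hxj hxi
    rw [hEi, hEj] at this
    tauto

open scoped symmDiff in
/-- Any `M`-alternating cycle contains an edge of every anti-forcing set of `M`. -/
lemma IsAntiForcingSet.exists_edge_mem {M : G.Subgraph} {S : Set (Sym2 V)}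
    (hM : M.IsPerfectMatching) (hS : G.IsAntiForcingSet M S)
    {v : V} {c : G.Walk v v} (hc : G.IsAltCycle M.edgeSet c) :
    ∃ e ∈ c.edges, e ∈ S := by
  by_contra hcon
  push_neg at hcon
  set G' := c.toSubgraph.spanningCoe with hG'
  have hcyc := hc.1
  have h3 := hcyc.three_le_length
  have hG'cyc : G'.IsCycles := hcyc.isCycles_toSubgraph_spanningCoe
  have hG'alt : G'.IsAlternating M.spanningCoe := by
    intro x w w' hne h1 h2
    simp only [hG', Subgraph.spanningCoe_adj] at h1 h2 ⊢
    rw [← Subgraph.mem_edgeSet, ← Subgraph.mem_edgeSet]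
    exact Walk.IsAltCycle.isAlternating hc hne h1 h2
  have hPM := Subgraph.IsPerfectMatching.symmDiff_of_isAlternating hM hG'alt hG'cyc
  have hle : M.spanningCoe ∆ G' ≤ G := by
    intro a b hab
    rw [symmDiff_def] at hab
    rcases hab with h | h
    · exact M.adj_sub h.1
    · exact c.toSubgraph.adj_sub h.1
  set N : G.Subgraph := (SimpleGraph.toSubgraph (M.spanningCoe ∆ G') le_rfl).map
    (Hom.ofLE hle) with hN
  have hNadj : ∀ x y, N.Adj x y ↔ (M.spanningCoe ∆ G').Adj x y := by
    intro x y
    constructor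
    · rintro ⟨a, b, hab, ha, hb⟩
      simp only [Hom.coe_ofLE, id_eq] at ha hb
      subst ha; subst hb
      exact hab
    · intro h
      exact ⟨x, y, h, rfl, rfl⟩
  have hNPM : N.IsPerfectMatching := by
    refine ⟨hPM.1.map_ofLE hle, ?_⟩
    intro x
    simp only [hN, Subgraph.map_verts, Hom.coe_ofLE, id_eq, Set.image_id']
    exact hPM.2 x
  have hNedge : ∀ e, e ∈ N.edgeSet → e ∈ M.edgeSet ∨ e ∈ c.edges := by
    intro e he
    induction e with
    | _ x y =>
      rw [Subgraph.mem_edgeSet, hNadj] at he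
      rw [symmDiff_def] at he
      rcases he with h | h
      · left; rw [Subgraph.mem_edgeSet]; exact h.1
      · right
        rw [← Walk.mem_edges_toSubgraph, Subgraph.mem_edgeSet]
        exact h.1
  have hdisj : Disjoint N.edgeSet S := by
    rw [Set.disjoint_left]
    intro e he hes
    rcases hNedge e he with h | h
    · exact ((hS.1 hes).2) h
    · exact hcon e h hes
  have hNM := hS.2 N hNPM hdisj
  have hel : c.edges.length = c.length := c.length_edges
  have hE0 : c.edges[0]'(by omega) = s(c.getVert 0, c.getVert 1) :=
    c.edges_getElem_eq_getVert (by omega)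
  have hE1 : c.edges[1]'(by omega) = s(c.getVert 1, c.getVert 2) :=
    c.edges_getElem_eq_getVert (by omega)
  have hchain := List.isChain_iff_getElem.mp hc.2.1 0 (by omega)
  obtain ⟨a, b, hab, hmem, hnm⟩ : ∃ a b, c.toSubgraph.Adj a b ∧ s(a,b) ∈ c.edges ∧
      s(a,b) ∉ M.edgeSet := by
    by_cases h0 : (c.edges[0]'(by omega)) ∈ M.edgeSet
    · refine ⟨c.getVert 1, c.getVert 2, ?_, ?_, ?_⟩
      · exact c.toSubgraph_adj_getVert (by omega)
      · rw [← hE1]; exact List.getElem_mem _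
      · rw [← hE1]; exact hchain.mp h0
    · refine ⟨c.getVert 0, c.getVert 1, ?_, ?_, ?_⟩
      · exact c.toSubgraph_adj_getVert (by omega)
      · rw [← hE0]; exact List.getElem_mem _
      · rw [← hE0]; exact h0
  have hNab : N.Adj a b := by
    rw [hNadj, symmDiff_def]
    right
    refine ⟨hab, ?_⟩
    rw [Subgraph.spanningCoe_adj, ← Subgraph.mem_edgeSet]
    exact hnm
  rw [hNM] at hNab
  exact hnm (Subgraph.mem_edgeSet.mpr hNab)

lemma Subgraph.IsPerfectMatching.eq_of_edgeSet_subset {M N : G.Subgraph}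
    (hM : M.IsPerfectMatching) (hN : N.IsPerfectMatching) (h : N.edgeSet ⊆ M.edgeSet) :
    N = M := by
  have hverts : N.verts = M.verts := by
    rw [hN.2.verts_eq_univ, hM.2.verts_eq_univ]
  apply Subgraph.ext hverts
  ext x y
  constructor
  · intro hxy
    rw [← Subgraph.mem_edgeSet]
    exact h (Subgraph.mem_edgeSet.mpr hxy)
  · intro hxy
    obtain ⟨w, hw, huniq⟩ := hN.1 (hN.2 x)
    have hMxw : M.Adj x w := Subgraph.mem_edgeSet.mp (h (Subgraph.mem_edgeSet.mpr hw))
    obtain ⟨w', hw', huniq'⟩ := hM.1 (hM.2 x)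
    have h1 : y = w' := huniq' y hxy
    have h2 : w = w' := huniq' w hMxw
    rw [h1, ← h2]
    exact hw

end SimpleGraph

end Aux

/-- For any perfect matching `M` of `G`, `af(G,M) ≥ c'(M)`. -/
theorem antiForcingNum_ge_compatNum (G : SimpleGraph V) [Fintype V]
    (M : G.Subgraph) (hM : M.IsPerfectMatching) :
    G.compatNum M ≤ G.antiForcingNum M := by
    classical
  have hA : {n | ∃ S : Set (Sym2 V), G.IsAntiForcingSet M S ∧ S.ncard = n}.Nonempty := by
    refine ⟨(G.edgeSet \ M.edgeSet).ncard, G.edgeSet \ M.edgeSet, ⟨subset_rfl, ?_⟩, rfl⟩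
    intro N hN hdisj
    refine hM.eq_of_edgeSet_subset hN ?_
    intro e he
    by_contra hem
    exact Set.disjoint_left.mp hdisj he ⟨N.edgeSet_subset he, hem⟩
  obtain ⟨S, hS, hcard⟩ := Nat.sInf_mem hA
  rw [SimpleGraph.compatNum, SimpleGraph.antiForcingNum, ← hcard]
  apply csSup_le
  · exact ⟨0, fun i => i.elim0, fun i => i.elim0, fun i => i.elim0⟩
  · rintro n ⟨f, halt, hcompat⟩
    choose e he hes using fun i => hS.exists_edge_mem hM (halt i)
    have hinj : Function.Injective fun i => (⟨e i, hes i⟩ : S) := by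
      intro i j hij
      by_contra hne
      simp only [Subtype.mk.injEq] at hij
      have hmem : e i ∈ M.edgeSet :=
        (hcompat i j hne).1 (e i) (he i) (hij ▸ he j)
      exact (hS.1 (hes i)).2 hmem
    calc n = Nat.card (Fin n) := by simp
      _ ≤ Nat.card S := Nat.card_le_card_of_injective _ hinj
      _ = S.ncard := Nat.card_coe_set_eq S
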